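/- arXiv:2510.11315 — 3 statements merged into one kernel-verified Lean document; each statement's English description precedes it below -/
import Mathlib

section
/- For all a > 0 and b > 0, the integral ∫₀^∞ exp(-a/η² - b·η²) dη equals (1/2)·√(π/b)·exp(-2√(a·b)). -/
open Real MeasureTheory Set Filter

theorem gaussian_type_integral (a b : ℝ) (ha : 0 < a) (hb : 0 < b) :
    ∫ η in Set.Ioi (0:ℝ), Real.exp (-a / η ^ 2 - b * η ^ 2)
      = (1 / 2) * Real.sqrt (π / b) * Real.exp (-2 * Real.sqrt (a * b)) := by
  set sa := Real.sqrt a with hsa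
  set sb := Real.sqrt b with hsb
  have hsa0 : 0 < sa := Real.sqrt_pos.2 ha
  have hsb0 : 0 < sb := Real.sqrt_pos.2 hb
  have hsa2 : sa ^ 2 = a := Real.sq_sqrt ha.le
  have hsb2 : sb ^ 2 = b := Real.sq_sqrt hb.le
  have hsab : Real.sqrt (a * b) = sa * sb := Real.sqrt_mul ha.le b
  set E := fun x : ℝ => Real.exp (-a / x ^ 2 - b * x ^ 2) with hE
  set c := sa / sb with hc
  have hc0 : 0 < c := div_pos hsa0 hsb0
  have hc2 : c ^ 2 = a / b := by rw [hc, div_pow, hsa2, hsb2]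
  -- E is invariant under x ↦ c / x
  have hEinv : ∀ x : ℝ, x ∈ Ioi (0:ℝ) → E (c / x) = E x := by
    intro x hx
    have hx0 : x ≠ 0 := ne_of_gt hx
    have hc0' : c ≠ 0 := ne_of_gt hc0
    simp only [hE]
    congr 1
    have h1 : a / (c / x) ^ 2 = b * x ^ 2 := by
      rw [div_pow, hc2]; field_simp
    have h2 : b * (c / x) ^ 2 = a / x ^ 2 := by
      rw [div_pow, hc2]; field_simp
    rw [neg_div, neg_div] at *
    rw [← h1, ← h2]; ring
  -- image of inversion map
  have himg1 : (fun x : ℝ => c / x) '' Ioi 0 = Ioi 0 := by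
    ext y
    constructor
    · rintro ⟨x, hx, rfl⟩
      exact div_pos hc0 hx
    · intro hy
      exact ⟨c / y, div_pos hc0 hy, by field_simp⟩
  have hderiv1 : ∀ x ∈ Ioi (0:ℝ), HasDerivWithinAt (fun x : ℝ => c / x)
      (-(c / x ^ 2)) (Ioi 0) x := by
    intro x hx
    have := ((hasDerivAt_inv (ne_of_gt hx)).const_mul c).hasDerivWithinAt (s := Ioi (0:ℝ))
    have hfun : (fun x : ℝ => c / x) = fun y : ℝ => c * y⁻¹ := by
      funext y; rw [div_eq_mul_inv]
    rw [hfun]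
    exact this.congr_deriv (by ring)
  have hinj1 : Set.InjOn (fun x : ℝ => c / x) (Ioi 0) := by
    intro x hx y hy h
    simp only at h
    rw [div_eq_div_iff (ne_of_gt hx) (ne_of_gt hy)] at h
    exact (mul_left_cancel₀ (ne_of_gt hc0) h).symm
  have h1 : ∫ x in Ioi (0:ℝ), E x = ∫ x in Ioi (0:ℝ), c / x ^ 2 * E x := by
    conv_lhs => rw [← himg1]
    rw [integral_image_eq_integral_abs_deriv_smul measurableSet_Ioi hderiv1 hinj1 E]
    refine setIntegral_congr_fun measurableSet_Ioi fun x hx => ?_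
    have hx2 : (0:ℝ) < c / x ^ 2 := div_pos hc0 (pow_pos hx 2)
    rw [abs_neg, abs_of_pos hx2, smul_eq_mul, hEinv x hx]
  -- integrability
  have hEcont : ContinuousOn E (Ioi 0) := by
    apply Real.continuous_exp.comp_continuousOn
    exact (continuousOn_const.div (continuous_pow 2).continuousOn
      fun x hx => pow_ne_zero 2 (ne_of_gt hx)).sub
      (continuous_const.mul (continuous_pow 2)).continuousOn
  have hIE : IntegrableOn E (Ioi 0) := by
    apply Integrable.mono' ((integrable_exp_neg_mul_sq hb).integrableOn)
      (hEcont.aestronglyMeasurable measurableSet_Ioi)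
    filter_upwards [ae_restrict_mem measurableSet_Ioi] with x hx
    rw [Real.norm_eq_abs, Real.abs_exp]
    apply Real.exp_le_exp.2
    have : -a / x ^ 2 ≤ 0 := div_nonpos_of_nonpos_of_nonneg (by linarith) (sq_nonneg x)
    linarith
  have hIK : IntegrableOn (fun x => c / x ^ 2 * E x) (Ioi 0) := by
    have hiff := (integrableOn_image_iff_integrableOn_abs_deriv_smul measurableSet_Ioi
      hderiv1 hinj1 E)
    rw [himg1] at hiff
    refine (hiff.1 hIE).congr_fun (fun x hx => ?_) measurableSet_Ioi
    have hx2 : (0:ℝ) < c / x ^ 2 := div_pos hc0 (pow_pos hx 2)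
    beta_reduce; rw [abs_neg, abs_of_pos hx2, smul_eq_mul, hEinv x hx]
  -- main substitution
  set f₂ := fun x : ℝ => sb * x - sa / x with hf₂
  have himg2 : f₂ '' Ioi 0 = univ := by
    apply eq_univ_of_forall
    intro y
    set D := Real.sqrt (y ^ 2 + 4 * (sa * sb)) with hD
    have hD2 : D ^ 2 = y ^ 2 + 4 * (sa * sb) := Real.sq_sqrt (by positivity)
    have habs : |y| < D := by
      rw [← Real.sqrt_sq_eq_abs]
      apply Real.sqrt_lt_sqrt (sq_nonneg y)
      nlinarith
    have hyD : -y < D := by have := neg_abs_le y; linarith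
    have hx0 : 0 < (y + D) / (2 * sb) := by
      apply div_pos (by linarith) (by linarith)
    refine ⟨(y + D) / (2 * sb), hx0, ?_⟩
    have hq : sb * ((y + D) / (2 * sb)) ^ 2 - y * ((y + D) / (2 * sb)) - sa = 0 := by
      field_simp
      linear_combination hD2
    simp only [hf₂]
    have hne : (y + D) / (2 * sb) ≠ 0 := ne_of_gt hx0
    have hdiv : sa / ((y + D) / (2 * sb)) = sb * ((y + D) / (2 * sb)) - y := by
      rw [div_eq_iff hne]
      linear_combination -hq
    rw [hdiv]
    ring
  have hderiv2 : ∀ x ∈ Ioi (0:ℝ), HasDerivWithinAt f₂ (sb + sa / x ^ 2) (Ioi 0) x := by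
    intro x hx
    have h1 : HasDerivWithinAt (fun x : ℝ => sb * x) sb (Ioi 0) x := by
      simpa using ((hasDerivAt_id x).const_mul sb).hasDerivWithinAt
    have h2 : HasDerivWithinAt (fun x : ℝ => sa / x) (-(sa / x ^ 2)) (Ioi 0) x := by
      have := ((hasDerivAt_inv (ne_of_gt hx)).const_mul sa).hasDerivWithinAt (s := Ioi (0:ℝ))
      have hfun : (fun x : ℝ => sa / x) = fun y : ℝ => sa * y⁻¹ := by
        funext y; rw [div_eq_mul_inv]
      rw [hfun]
      exact this.congr_deriv (by ring)
    exact (h1.sub h2).congr_deriv (by ring)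
  have hinj2 : Set.InjOn f₂ (Ioi 0) := by
    apply StrictMonoOn.injOn
    intro x hx y hy hxy
    simp only [hf₂]
    have h1 : sb * x < sb * y := by exact mul_lt_mul_of_pos_left hxy hsb0
    have h2 : sa / y < sa / x := div_lt_div_of_pos_left hsa0 hx hxy
    linarith
  -- the gaussian integral
  have hgauss : ∫ x : ℝ, Real.exp (-x ^ 2) = Real.sqrt π := by
    simpa using integral_gaussian 1
  have hmain : Real.sqrt π =
      ∫ x in Ioi (0:ℝ), (sb + sa / x ^ 2) * (Real.exp (2 * (sa * sb)) * E x) := by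
    rw [← hgauss, ← setIntegral_univ, ← himg2,
      integral_image_eq_integral_abs_deriv_smul measurableSet_Ioi hderiv2 hinj2]
    refine setIntegral_congr_fun measurableSet_Ioi fun x hx => ?_
    have hx2 : (0:ℝ) < sb + sa / x ^ 2 := by positivity
    rw [abs_of_pos hx2, smul_eq_mul]
    congr 1
    rw [← Real.exp_add]
    congr 1
    have hxne : x ≠ 0 := ne_of_gt hx
    simp only [hf₂, hE]
    field_simp
    linear_combination (-1) * hsa2 + (-(x ^ 4)) * hsb2
  have hsbc : sb * c = sa := by rw [hc]; field_simp
  have hsplit : ∫ x in Ioi (0:ℝ), (sb + sa / x ^ 2) * (Real.exp (2 * (sa * sb)) * E x)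
      = Real.exp (2 * (sa * sb)) * (2 * sb * ∫ x in Ioi (0:ℝ), E x) := by
    have hfun : ∀ x ∈ Ioi (0:ℝ), (sb + sa / x ^ 2) * (Real.exp (2 * (sa * sb)) * E x)
        = (Real.exp (2 * (sa * sb)) * sb) * E x
          + (Real.exp (2 * (sa * sb)) * sb) * (c / x ^ 2 * E x) := by
      intro x hx
      have hxne : x ≠ 0 := ne_of_gt hx
      rw [← hsbc]
      field_simp
    rw [setIntegral_congr_fun measurableSet_Ioi hfun,
      integral_add (hIE.const_mul _) (hIK.const_mul _),
      integral_const_mul, integral_const_mul, ← h1]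
    ring
  have hfinal := hmain.trans hsplit
  have hπb : Real.sqrt (π / b) = Real.sqrt π / sb := Real.sqrt_div Real.pi_pos.le b
  rw [hπb, hsab]
  have hexp : Real.exp (-2 * (sa * sb)) = (Real.exp (2 * (sa * sb)))⁻¹ := by
    rw [← Real.exp_neg]; ring_nf
  rw [hexp]
  have hK : Real.exp (2 * (sa * sb)) ≠ 0 := Real.exp_ne_zero _
  field_simp
  ring_nf; ring_nf at hfinal; rw [mul_comm sb sa]; linarith [hfinal]
end

section
/- Let ω ∈ ℝ and ψ > 0. Then for every x ∈ ℝ, ∫₀^∞ (1/(η√(2π)))·exp(-(x-ω)²/(2η²)) · (η/ψ²)·exp(-η²/(2ψ²)) dη = (1/(2ψ))·exp(-|x-ω|/ψ). -/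
open Real MeasureTheory Set

-- integrability of the basic integrand
lemma glasser_int1 {b c : ℝ} (hb : 0 ≤ b) (hc : 0 < c) :
    IntegrableOn (fun t : ℝ => Real.exp (-(b / t ^ 2 + c * t ^ 2))) (Ioi 0) := by
  apply Integrable.mono' ((integrable_exp_neg_mul_sq hc).restrict (s := Ioi 0))
  · apply ContinuousOn.aestronglyMeasurable ?_ measurableSet_Ioi
    apply ContinuousOn.rexp
    apply ContinuousOn.neg
    apply ContinuousOn.add
    · exact continuousOn_const.div (continuousOn_pow 2) (fun t ht => by
        have : (0:ℝ) < t := ht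
        positivity)
    · exact (continuousOn_const.mul (continuousOn_pow 2))
  · filter_upwards [ae_restrict_mem measurableSet_Ioi] with t ht
    have ht' : (0:ℝ) < t := ht
    rw [Real.norm_eq_abs, Real.abs_exp]
    apply Real.exp_le_exp.mpr
    have : 0 ≤ b / t ^ 2 := by positivity
    linarith

lemma glasser_int2 {b c : ℝ} (hb : 0 < b) (hc : 0 < c) :
    IntegrableOn (fun t : ℝ =>
      (Real.sqrt b * (t ^ 2)⁻¹) * Real.exp (-(b / t ^ 2 + c * t ^ 2))) (Ioi 0) := by
  have hsb : 0 < Real.sqrt b := Real.sqrt_pos.mpr hb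
  apply Integrable.mono'
    (((integrable_exp_neg_mul_sq hc).restrict (s := Ioi 0)).const_mul (Real.sqrt b)⁻¹)
  · apply ContinuousOn.aestronglyMeasurable ?_ measurableSet_Ioi
    apply ContinuousOn.mul
    · exact continuousOn_const.mul ((continuousOn_pow 2).inv₀ (fun t ht => by
        have : (0:ℝ) < t := ht; positivity))
    · apply ContinuousOn.rexp
      apply ContinuousOn.neg
      apply ContinuousOn.add
      · exact continuousOn_const.div (continuousOn_pow 2) (fun t ht => by
          have : (0:ℝ) < t := ht; positivity)
      · exact (continuousOn_const.mul (continuousOn_pow 2))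
  · filter_upwards [ae_restrict_mem measurableSet_Ioi] with t ht
    have ht' : (0:ℝ) < t := ht
    have hE : Real.exp (-(b / t ^ 2 + c * t ^ 2))
        = Real.exp (-(b / t ^ 2)) * Real.exp (-(c * t ^ 2)) := by
      rw [← Real.exp_add]; ring_nf
    have h1 : b / t ^ 2 ≤ Real.exp (b / t ^ 2) := by
      have := Real.add_one_le_exp (b / t ^ 2)
      linarith
    have hb2 : Real.sqrt b ^ 2 = b := Real.sq_sqrt hb.le
    have hexp : (0:ℝ) < Real.exp (b / t ^ 2) := Real.exp_pos _
    have ht2 : (0:ℝ) < t ^ 2 := by positivity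
    have key : Real.sqrt b * (t ^ 2)⁻¹ * Real.exp (-(b / t ^ 2)) ≤ (Real.sqrt b)⁻¹ := by
      have hb' : b ≤ t ^ 2 * Real.exp (b / t ^ 2) := by
        have := (div_le_iff₀ ht2).mp h1
        linarith
      have goal' : Real.sqrt b / (t ^ 2 * Real.exp (b / t ^ 2)) ≤ 1 / Real.sqrt b := by
        rw [div_le_div_iff₀ (by positivity) hsb]
        nlinarith
      calc Real.sqrt b * (t ^ 2)⁻¹ * Real.exp (-(b / t ^ 2))
          = Real.sqrt b / (t ^ 2 * Real.exp (b / t ^ 2)) := by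
            rw [Real.exp_neg, div_eq_mul_inv (√b) (t ^ 2 * Real.exp (b / t ^ 2)), mul_inv]; ring
        _ ≤ 1 / Real.sqrt b := goal'
        _ = (Real.sqrt b)⁻¹ := one_div _
    rw [Real.norm_eq_abs]
    have hpos : 0 ≤ Real.sqrt b * (t ^ 2)⁻¹ * Real.exp (-(b / t ^ 2 + c * t ^ 2)) := by
      positivity
    rw [abs_of_nonneg hpos, hE, ← mul_assoc]
    have : 0 ≤ Real.exp (-(c * t ^ 2)) := (Real.exp_pos _).le
    calc Real.sqrt b * (t ^ 2)⁻¹ * Real.exp (-(b / t ^ 2)) * Real.exp (-(c * t ^ 2))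
        ≤ (Real.sqrt b)⁻¹ * Real.exp (-(c * t ^ 2)) := by
          apply mul_le_mul_of_nonneg_right key this
      _ = (Real.sqrt b)⁻¹ * Real.exp (-c * t ^ 2) := by ring_nf

lemma glasser_refl {b c : ℝ} (hb : 0 < b) (hc : 0 < c) :
    ∫ t in Ioi (0:ℝ), (Real.sqrt (b / c) * (t ^ 2)⁻¹) * Real.exp (-(b / t ^ 2 + c * t ^ 2))
      = ∫ t in Ioi (0:ℝ), Real.exp (-(b / t ^ 2 + c * t ^ 2)) := by
  set k := Real.sqrt (b / c) with hkdef
  have hk : 0 < k := Real.sqrt_pos.mpr (by positivity)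
  have hk2 : k ^ 2 = b / c := Real.sq_sqrt (by positivity)
  have himg : (fun t : ℝ => k * t⁻¹) '' Ioi 0 = Ioi (0:ℝ) := by
    ext y
    simp only [Set.mem_image, Set.mem_Ioi]
    constructor
    · rintro ⟨t, ht, rfl⟩; positivity
    · intro hy
      exact ⟨k / y, by positivity, by field_simp⟩
  have hderiv : ∀ t ∈ Ioi (0:ℝ),
      HasDerivWithinAt (fun t : ℝ => k * t⁻¹) (-(k * (t ^ 2)⁻¹)) (Ioi 0) t := by
    intro t ht
    have ht' : (0:ℝ) < t := ht
    have h1 := ((hasDerivAt_inv ht'.ne').const_mul k).hasDerivWithinAt (s := Ioi 0)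
    rw [show -(k * (t ^ 2)⁻¹) = k * -(t ^ 2)⁻¹ by ring]
    exact h1
  have hinj : InjOn (fun t : ℝ => k * t⁻¹) (Ioi 0) := by
    intro t1 h1 t2 h2 he
    have := mul_left_cancel₀ hk.ne' he
    exact inv_injective this
  have key := integral_image_eq_integral_abs_deriv_smul measurableSet_Ioi hderiv hinj
      (fun s => Real.exp (-(b / s ^ 2 + c * s ^ 2)))
  rw [himg] at key
  rw [key]
  apply setIntegral_congr_fun measurableSet_Ioi
  intro t ht
  have ht' : (0:ℝ) < t := ht
  have harg : b / (k * t⁻¹) ^ 2 + c * (k * t⁻¹) ^ 2 = b / t ^ 2 + c * t ^ 2 := by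
    rw [mul_pow, hk2]
    field_simp
    ring
  simp only [smul_eq_mul, abs_neg, harg]
  rw [abs_of_pos (by positivity)]

theorem glasser_pos {b c : ℝ} (hb : 0 < b) (hc : 0 < c) :
    ∫ t in Ioi (0:ℝ), Real.exp (-(b / t ^ 2 + c * t ^ 2))
      = Real.sqrt π / (2 * Real.sqrt c)
          * Real.exp (-(2 * Real.sqrt b * Real.sqrt c)) := by
  set sb := Real.sqrt b with hsbdef
  set sc := Real.sqrt c with hscdef
  have hsb : 0 < sb := Real.sqrt_pos.mpr hb
  have hsc : 0 < sc := Real.sqrt_pos.mpr hc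
  have hb2 : sb ^ 2 = b := Real.sq_sqrt hb.le
  have hc2 : sc ^ 2 = c := Real.sq_sqrt hc.le
  set f : ℝ → ℝ := fun t => sc * t - sb * t⁻¹ with hfdef
  have hderiv : ∀ t ∈ Ioi (0:ℝ),
      HasDerivWithinAt f (sc + sb * (t ^ 2)⁻¹) (Ioi 0) t := by
    intro t ht
    have ht' : (0:ℝ) < t := ht
    have h1 : HasDerivAt f (sc * 1 - sb * (-(t ^ 2)⁻¹)) t :=
      ((hasDerivAt_id t).const_mul sc).sub ((hasDerivAt_inv ht'.ne').const_mul sb)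
    have h2 : sc * 1 - sb * (-(t ^ 2)⁻¹) = sc + sb * (t ^ 2)⁻¹ := by ring
    rw [h2] at h1
    exact h1.hasDerivWithinAt
  have himg : f '' Ioi 0 = Set.univ := by
    ext y
    simp only [Set.mem_image, Set.mem_Ioi, Set.mem_univ, iff_true]
    set s := Real.sqrt (y ^ 2 + 4 * sb * sc) with hsdef
    have hs2 : s ^ 2 = y ^ 2 + 4 * sb * sc := Real.sq_sqrt (by positivity)
    have hys : |y| < s := by
      rw [← Real.sqrt_sq_eq_abs]
      apply Real.sqrt_lt_sqrt (sq_nonneg y)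
      nlinarith
    have hy1 : -y < s := by linarith [neg_abs_le y]
    have hy2 : y < s := by linarith [le_abs_self y]
    have hden : 0 < y + s := by linarith
    refine ⟨(y + s) / (2 * sc), by positivity, ?_⟩
    show sc * ((y + s) / (2 * sc)) - sb * ((y + s) / (2 * sc))⁻¹ = y
    field_simp
    nlinarith [hs2]
  have hinj : InjOn f (Ioi 0) := by
    apply StrictMonoOn.injOn
    intro t1 h1 t2 h2 hlt
    have h1' : (0:ℝ) < t1 := h1
    have h2' : (0:ℝ) < t2 := h2
    show sc * t1 - sb * t1⁻¹ < sc * t2 - sb * t2⁻¹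
    have ha : sc * t1 < sc * t2 := by nlinarith
    have hinv : t2⁻¹ ≤ t1⁻¹ := by
      apply inv_anti₀ h1' hlt.le
    have hbb : sb * t2⁻¹ ≤ sb * t1⁻¹ := by nlinarith
    linarith
  have hgauss : ∫ u : ℝ, Real.exp (-u ^ 2) = Real.sqrt π := by
    simpa using integral_gaussian 1
  have himage := integral_image_eq_integral_abs_deriv_smul measurableSet_Ioi hderiv hinj
      (fun u => Real.exp (-u ^ 2))
  rw [himg, Measure.restrict_univ, hgauss] at himage
  have hcongr : ∫ t in Ioi (0:ℝ), |sc + sb * (t ^ 2)⁻¹| • Real.exp (-f t ^ 2)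
      = ∫ t in Ioi (0:ℝ), Real.exp (2 * sb * sc) *
          (sc * Real.exp (-(b / t ^ 2 + c * t ^ 2))
            + (sb * (t ^ 2)⁻¹) * Real.exp (-(b / t ^ 2 + c * t ^ 2))) := by
    apply setIntegral_congr_fun measurableSet_Ioi
    intro t ht
    have ht' : (0:ℝ) < t := ht
    have harg : -f t ^ 2 = 2 * sb * sc - (b / t ^ 2 + c * t ^ 2) := by
      show -(sc * t - sb * t⁻¹) ^ 2 = 2 * sb * sc - (b / t ^ 2 + c * t ^ 2)
      rw [← hb2, ← hc2]
      field_simp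
      ring
    simp only [smul_eq_mul]
    rw [abs_of_pos (by positivity), harg, Real.exp_sub, Real.exp_neg, div_eq_mul_inv]
    ring
  have hsplit : ∫ t in Ioi (0:ℝ), Real.exp (2 * sb * sc) *
          (sc * Real.exp (-(b / t ^ 2 + c * t ^ 2))
            + (sb * (t ^ 2)⁻¹) * Real.exp (-(b / t ^ 2 + c * t ^ 2)))
      = Real.exp (2 * sb * sc) *
          (sc * (∫ t in Ioi (0:ℝ), Real.exp (-(b / t ^ 2 + c * t ^ 2)))
            + ∫ t in Ioi (0:ℝ), (sb * (t ^ 2)⁻¹) * Real.exp (-(b / t ^ 2 + c * t ^ 2))) := by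
    rw [integral_const_mul]
    congr 1
    rw [integral_add ((glasser_int1 hb.le hc).const_mul sc) (glasser_int2 hb hc),
      integral_const_mul]
  have hJ : ∫ t in Ioi (0:ℝ), (sb * (t ^ 2)⁻¹) * Real.exp (-(b / t ^ 2 + c * t ^ 2))
      = sc * ∫ t in Ioi (0:ℝ), Real.exp (-(b / t ^ 2 + c * t ^ 2)) := by
    have hk : Real.sqrt (b / c) = sb / sc := Real.sqrt_div hb.le c
    have h0 := glasser_refl hb hc
    calc ∫ t in Ioi (0:ℝ), (sb * (t ^ 2)⁻¹) * Real.exp (-(b / t ^ 2 + c * t ^ 2))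
        = ∫ t in Ioi (0:ℝ), sc * ((Real.sqrt (b / c) * (t ^ 2)⁻¹)
            * Real.exp (-(b / t ^ 2 + c * t ^ 2))) := by
          apply setIntegral_congr_fun measurableSet_Ioi
          intro t ht
          rw [hk]
          field_simp
      _ = sc * ∫ t in Ioi (0:ℝ), (Real.sqrt (b / c) * (t ^ 2)⁻¹)
            * Real.exp (-(b / t ^ 2 + c * t ^ 2)) := integral_const_mul _ _
      _ = sc * ∫ t in Ioi (0:ℝ), Real.exp (-(b / t ^ 2 + c * t ^ 2)) := by rw [h0]
  rw [hcongr, hsplit, hJ] at himage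
  set I := ∫ t in Ioi (0:ℝ), Real.exp (-(b / t ^ 2 + c * t ^ 2)) with hIdef
  have hE : (0:ℝ) < Real.exp (2 * sb * sc) := Real.exp_pos _
  rw [Real.exp_neg]
  field_simp
  rw [show (2:ℝ) * sc * sb = 2 * sb * sc by ring]
  nlinarith [himage]

theorem glasser_nonneg {b c : ℝ} (hb : 0 ≤ b) (hc : 0 < c) :
    ∫ t in Ioi (0:ℝ), Real.exp (-(b / t ^ 2 + c * t ^ 2))
      = Real.sqrt π / (2 * Real.sqrt c)
          * Real.exp (-(2 * Real.sqrt b * Real.sqrt c)) := by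
  rcases hb.eq_or_lt with h | h
  · rw [← h]
    have h1 : (fun t : ℝ => Real.exp (-((0:ℝ) / t ^ 2 + c * t ^ 2)))
        = fun t : ℝ => Real.exp (-c * t ^ 2) := by
      funext t
      rw [zero_div, zero_add, neg_mul]
    rw [show (∫ t in Ioi (0:ℝ), Real.exp (-((0:ℝ) / t ^ 2 + c * t ^ 2)))
        = ∫ t in Ioi (0:ℝ), Real.exp (-c * t ^ 2) by rw [h1]]
    rw [integral_gaussian_Ioi c]
    rw [Real.sqrt_zero, mul_zero, zero_mul, neg_zero, Real.exp_zero, mul_one,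
      Real.sqrt_div Real.pi_pos.le, div_div, mul_comm]
  · exact glasser_pos h hc

theorem gaussian_rayleigh_mixture (ω ψ : ℝ) (hψ : 0 < ψ) (x : ℝ) :
    ∫ η in Set.Ioi (0:ℝ),
        (1 / (η * Real.sqrt (2 * π))) * Real.exp (-(x - ω) ^ 2 / (2 * η ^ 2))
          * ((η / ψ ^ 2) * Real.exp (-η ^ 2 / (2 * ψ ^ 2)))
      = (1 / (2 * ψ)) * Real.exp (-|x - ω| / ψ) := by
  have hb : (0:ℝ) ≤ (x - ω) ^ 2 / 2 := by positivity
  have hc : (0:ℝ) < 1 / (2 * ψ ^ 2) := by positivity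
  have hπ : (0:ℝ) < Real.sqrt π := Real.sqrt_pos.mpr Real.pi_pos
  have h2 : (0:ℝ) < Real.sqrt 2 := by positivity
  have hstep : ∀ η ∈ Ioi (0:ℝ),
      (1 / (η * Real.sqrt (2 * π))) * Real.exp (-(x - ω) ^ 2 / (2 * η ^ 2))
        * ((η / ψ ^ 2) * Real.exp (-η ^ 2 / (2 * ψ ^ 2)))
      = (1 / (Real.sqrt (2 * π) * ψ ^ 2)) *
          Real.exp (-((x - ω) ^ 2 / 2 / η ^ 2 + (1 / (2 * ψ ^ 2)) * η ^ 2)) := by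
    intro η hη
    have hη' : (0:ℝ) < η := hη
    have hsq : (0:ℝ) < Real.sqrt (2 * π) := Real.sqrt_pos.mpr (by positivity)
    have hAB : Real.exp (-(x - ω) ^ 2 / (2 * η ^ 2)) * Real.exp (-η ^ 2 / (2 * ψ ^ 2))
        = Real.exp (-((x - ω) ^ 2 / 2 / η ^ 2 + (1 / (2 * ψ ^ 2)) * η ^ 2)) := by
      rw [← Real.exp_add]
      congr 1
      field_simp
      ring
    calc (1 / (η * Real.sqrt (2 * π))) * Real.exp (-(x - ω) ^ 2 / (2 * η ^ 2))
          * ((η / ψ ^ 2) * Real.exp (-η ^ 2 / (2 * ψ ^ 2)))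
        = ((1 / (η * Real.sqrt (2 * π))) * (η / ψ ^ 2)) *
            (Real.exp (-(x - ω) ^ 2 / (2 * η ^ 2)) * Real.exp (-η ^ 2 / (2 * ψ ^ 2))) := by
          ring
      _ = (1 / (Real.sqrt (2 * π) * ψ ^ 2)) *
          Real.exp (-((x - ω) ^ 2 / 2 / η ^ 2 + (1 / (2 * ψ ^ 2)) * η ^ 2)) := by
          rw [hAB]
          congr 1
          field_simp
  rw [setIntegral_congr_fun measurableSet_Ioi hstep, integral_const_mul,
    glasser_nonneg hb hc]
  have hsb : Real.sqrt ((x - ω) ^ 2 / 2) = |x - ω| / Real.sqrt 2 := by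
    rw [Real.sqrt_div (sq_nonneg _), Real.sqrt_sq_eq_abs]
  have hsc : Real.sqrt (1 / (2 * ψ ^ 2)) = 1 / (Real.sqrt 2 * ψ) := by
    rw [one_div, Real.sqrt_inv, Real.sqrt_mul (by norm_num : (0:ℝ) ≤ 2),
      Real.sqrt_sq hψ.le, one_div]
  have hsqrt2 : Real.sqrt 2 * Real.sqrt 2 = 2 := Real.mul_self_sqrt (by norm_num)
  have h2π : Real.sqrt (2 * π) = Real.sqrt 2 * Real.sqrt π :=
    Real.sqrt_mul (by norm_num) π
  rw [hsb, hsc, h2π]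
  have hexp : -(2 * (|x - ω| / Real.sqrt 2) * (1 / (Real.sqrt 2 * ψ))) = -|x - ω| / ψ := by
    have hs2sq : Real.sqrt 2 ^ 2 = 2 := Real.sq_sqrt (by norm_num)
    field_simp
    linear_combination |x - ω| * hs2sq
  rw [hexp]
  have hcoef : (1 / (Real.sqrt 2 * Real.sqrt π * ψ ^ 2)) *
      (Real.sqrt π / (2 * (1 / (Real.sqrt 2 * ψ)))) = 1 / (2 * ψ) := by
    have hs2sq : Real.sqrt 2 ^ 2 = 2 := Real.sq_sqrt (by norm_num)
    field_simp
  rw [← mul_assoc, hcoef]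
end

section
/- Let ω ∈ ℝ, ψ > 0. The median of the Arctan mixture distribution, i.e., the unique x with G(x) = 1/2, equals ω + ψ·ln(2·tan(π/8)). Since 2·tan(π/8) = 2(√2 - 1) < 1, the median is strictly less than ω. -/
open Real

lemma sqrt2_lt : Real.sqrt 2 < 3/2 := by
  nlinarith [Real.sq_sqrt (by norm_num : (2:ℝ) ≥ 0), Real.sqrt_nonneg 2]

lemma sqrt2_gt : 1 < Real.sqrt 2 := by
  nlinarith [Real.sq_sqrt (by norm_num : (2:ℝ) ≥ 0), Real.sqrt_nonneg 2]

lemma tan_pi_div_eight : Real.tan (π / 8) = Real.sqrt 2 - 1 := by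
  have hb : (0:ℝ) < Real.sqrt (2 + Real.sqrt 2) :=
    Real.sqrt_pos.2 (by nlinarith [Real.sqrt_nonneg 2])
  have key : Real.sqrt (2 - Real.sqrt 2) = (Real.sqrt 2 - 1) * Real.sqrt (2 + Real.sqrt 2) := by
    rw [show (2:ℝ) - Real.sqrt 2 = ((Real.sqrt 2 - 1) * Real.sqrt (2 + Real.sqrt 2))^2 by
      have h2 : (Real.sqrt 2)^2 = 2 := Real.sq_sqrt (by norm_num)
      have h3 : (Real.sqrt (2 + Real.sqrt 2))^2 = 2 + Real.sqrt 2 :=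
        Real.sq_sqrt (by nlinarith [Real.sqrt_nonneg 2])
      nlinarith [sqrt2_gt]]
    exact Real.sqrt_sq (by nlinarith [sqrt2_gt, hb])
  rw [Real.tan_eq_sin_div_cos, Real.sin_pi_div_eight, Real.cos_pi_div_eight, key]
  field_simp

/-- The Arctan–Gaussian–Rayleigh mixture CDF. -/
noncomputable def arctanCDF (ω ψ x : ℝ) : ℝ :=
  if ω ≤ x then (4 / π) * Real.arctan (1 - (1 / 2) * Real.exp (-(x - ω) / ψ))
  else (4 / π) * Real.arctan ((1 / 2) * Real.exp (-(ω - x) / ψ))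

theorem arctanCDF_median (ω ψ : ℝ) (hψ : 0 < ψ) :
    arctanCDF ω ψ (ω + ψ * Real.log (2 * Real.tan (π / 8))) = 1 / 2 ∧
    (∀ x, arctanCDF ω ψ x = 1 / 2 → x = ω + ψ * Real.log (2 * Real.tan (π / 8))) ∧
    2 * Real.tan (π / 8) = 2 * (Real.sqrt 2 - 1) ∧
    ω + ψ * Real.log (2 * Real.tan (π / 8)) < ω := by
  have hπ := Real.pi_pos
  have ht : Real.tan (π / 8) = Real.sqrt 2 - 1 := tan_pi_div_eight
  have htpos : (0:ℝ) < 2 * Real.tan (π / 8) := by rw [ht]; nlinarith [sqrt2_gt]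
  have htlt : 2 * Real.tan (π / 8) < 1 := by rw [ht]; nlinarith [sqrt2_lt]
  have hlog : Real.log (2 * Real.tan (π / 8)) < 0 := Real.log_neg htpos htlt
  have hmed : ω + ψ * Real.log (2 * Real.tan (π / 8)) < ω := by nlinarith
  have harc : Real.arctan (Real.tan (π / 8)) = π / 8 :=
    Real.arctan_tan (by linarith) (by linarith)
  refine ⟨?_, ?_, by rw [ht], hmed⟩
  · rw [arctanCDF, if_neg (not_le.2 hmed)]
    have : -(ω - (ω + ψ * Real.log (2 * Real.tan (π / 8)))) / ψ
        = Real.log (2 * Real.tan (π / 8)) := by field_simp; ring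
    rw [this, Real.exp_log htpos]
    rw [show (1:ℝ)/2 * (2 * Real.tan (π/8)) = Real.tan (π/8) by ring, harc]
    field_simp; ring
  · intro x hx
    rw [arctanCDF] at hx
    split_ifs at hx with h
    · exfalso
      have ha : Real.arctan (1 - 1/2 * Real.exp (-(x - ω) / ψ)) = π / 8 := by
        have hπ' : (4:ℝ)/π ≠ 0 := by positivity
        field_simp at hx ⊢; linarith
      have := congrArg Real.tan ha
      rw [Real.tan_arctan, ht] at this
      have hu : -(x - ω) / ψ ≤ 0 := by
        apply div_nonpos_of_nonpos_of_nonneg <;> linarith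
      have hexp : Real.exp (-(x - ω) / ψ) ≤ 1 := Real.exp_le_one_iff.2 hu
      have hexp0 : 0 < Real.exp (-(x - ω) / ψ) := Real.exp_pos _
      nlinarith [sqrt2_lt]
    · have ha : Real.arctan (1/2 * Real.exp (-(ω - x) / ψ)) = π / 8 := by
        have hπ' : (4:ℝ)/π ≠ 0 := by positivity
        field_simp at hx ⊢; linarith
      have h1 := congrArg Real.tan ha
      rw [Real.tan_arctan] at h1
      have h2 : Real.exp (-(ω - x) / ψ) = 2 * Real.tan (π / 8) := by linarith
      have h3 : -(ω - x) / ψ = Real.log (2 * Real.tan (π / 8)) := by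
        rw [← Real.log_exp (-(ω - x) / ψ), h2]
      field_simp at h3
      linarith
end
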